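/- arXiv:1203.1527 — 2 statements merged into one kernel-verified Lean document; each statement's English description precedes it below -/
import Mathlib

section
/- The binary code of length 6 generated by the rows (1,1,1,1,0,0), (1,1,0,0,1,1), (1,0,0,0,0,0) has dimension 3 and contains a 2-dimensional subcode of minimum distance 4 (spanned by the first two rows) and a 2-dimensional subcode of minimum distance 3 (spanned by (0,1,1,1,0,0) and (0,1,0,0,1,1)); hence two distinct minimum distances (3 and 4) can both have maximum subcode dimension 2 in the same code. -/
/-- Hamming weight of a binary vector. -/
def wt {n : ℕ} (x : Fin n → ZMod 2) : ℕ :=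
  (Finset.univ.filter fun i => x i ≠ 0).card

/-- Dual code with respect to the standard bilinear form. -/
def dualCode {n : ℕ} (C : Submodule (ZMod 2) (Fin n → ZMod 2)) :
    Submodule (ZMod 2) (Fin n → ZMod 2) where
  carrier := {x | ∀ c ∈ C, ∑ i, x i * c i = 0}
  add_mem' := by
    intro a b ha hb c hc
    have ha' := ha c hc
    have hb' := hb c hc
    simp only [Set.mem_setOf_eq, Pi.add_apply, add_mul] at *
    rw [Finset.sum_add_distrib, ha', hb', add_zero]
  zero_mem' := by
    intro c hc
    simp
  smul_mem' := by
    intro r a ha c hc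
    have ha' := ha c hc
    simp only [Set.mem_setOf_eq, Pi.smul_apply, smul_eq_mul, mul_assoc] at *
    rw [← Finset.mul_sum, ha', mul_zero]

/-- Minimum distance (minimum nonzero Hamming weight) of a binary linear code. -/
noncomputable def minDist {n : ℕ} (C : Submodule (ZMod 2) (Fin n → ZMod 2)) : ℕ :=
  sInf {w | ∃ c ∈ C, c ≠ 0 ∧ wt c = w}

/-- Number of codewords of weight `w` in `C` (the weight distribution `A_w`). -/
noncomputable def wtCount {n : ℕ} (C : Submodule (ZMod 2) (Fin n → ZMod 2)) (w : ℕ) : ℕ :=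
  Nat.card {c : Fin n → ZMod 2 // c ∈ C ∧ wt c = w}

def v1 : Fin 6 → ZMod 2 := ![1, 1, 1, 1, 0, 0]
def v2 : Fin 6 → ZMod 2 := ![1, 1, 0, 0, 1, 1]
def v3 : Fin 6 → ZMod 2 := ![1, 0, 0, 0, 0, 0]
def w1 : Fin 6 → ZMod 2 := ![0, 1, 1, 1, 0, 0]
def w2 : Fin 6 → ZMod 2 := ![0, 1, 0, 0, 1, 1]

lemma wt_zero {n : ℕ} {c : Fin n → ZMod 2} (h : wt c = 0) : c = 0 := by
  funext i
  by_contra hi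
  have hm : i ∈ Finset.univ.filter fun j => c j ≠ 0 := by
    simp only [Finset.mem_filter, Finset.mem_univ, true_and]; exact hi
  have := Finset.card_pos.mpr ⟨i, hm⟩
  unfold wt at h; omega

lemma minDist_eq {n : ℕ} (C : Submodule (ZMod 2) (Fin n → ZMod 2)) (d : ℕ)
    (hmem : ∃ c ∈ C, c ≠ 0 ∧ wt c = d)
    (hlb : ∀ c ∈ C, c ≠ 0 → d ≤ wt c) : minDist C = d := by
  apply le_antisymm
  · exact Nat.sInf_le hmem
  · apply le_csInf ⟨d, hmem⟩
    rintro w ⟨c, hc, hc0, rfl⟩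
    exact hlb c hc hc0

lemma pair_span_finrank (a b : Fin 6 → ZMod 2)
    (h : LinearIndependent (ZMod 2) ![a, b]) :
    Module.finrank (ZMod 2) (Submodule.span (ZMod 2) ({a, b} : Set (Fin 6 → ZMod 2))) = 2 := by
  have := finrank_span_eq_card h
  rwa [show Set.range ![a, b] = {a, b} by
    ext x; simp [Matrix.range_cons, Matrix.range_empty]; tauto] at this


/-- In the [6,3,1] code spanned by v1, v2, v3 the minimum distances 4 and 3 both
have maximum subcode dimension 2. -/
theorem stmt_14 :
    Module.finrank (ZMod 2)
      (Submodule.span (ZMod 2) ({v1, v2, v3} : Set (Fin 6 → ZMod 2))) = 3 ∧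
    minDist (Submodule.span (ZMod 2) ({v1, v2, v3} : Set (Fin 6 → ZMod 2))) = 1 ∧
    Submodule.span (ZMod 2) ({v1, v2} : Set (Fin 6 → ZMod 2)) ≤
      Submodule.span (ZMod 2) ({v1, v2, v3} : Set (Fin 6 → ZMod 2)) ∧
    Module.finrank (ZMod 2)
      (Submodule.span (ZMod 2) ({v1, v2} : Set (Fin 6 → ZMod 2))) = 2 ∧
    minDist (Submodule.span (ZMod 2) ({v1, v2} : Set (Fin 6 → ZMod 2))) = 4 ∧
    Submodule.span (ZMod 2) ({w1, w2} : Set (Fin 6 → ZMod 2)) ≤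
      Submodule.span (ZMod 2) ({v1, v2, v3} : Set (Fin 6 → ZMod 2)) ∧
    Module.finrank (ZMod 2)
      (Submodule.span (ZMod 2) ({w1, w2} : Set (Fin 6 → ZMod 2))) = 2 ∧
    minDist (Submodule.span (ZMod 2) ({w1, w2} : Set (Fin 6 → ZMod 2))) = 3 ∧
    (¬ ∃ S ≤ Submodule.span (ZMod 2) ({v1, v2, v3} : Set (Fin 6 → ZMod 2)),
      Module.finrank (ZMod 2) S = 3 ∧ minDist S = 4) ∧
    (¬ ∃ S ≤ Submodule.span (ZMod 2) ({v1, v2, v3} : Set (Fin 6 → ZMod 2)),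
      Module.finrank (ZMod 2) S = 3 ∧ minDist S = 3) ∧
    ∀ S ≤ Submodule.span (ZMod 2) ({v1, v2, v3} : Set (Fin 6 → ZMod 2)),
      Module.finrank (ZMod 2) S = 3 → ¬ 3 ≤ minDist S := by
  set C := Submodule.span (ZMod 2) ({v1, v2, v3} : Set (Fin 6 → ZMod 2)) with hCdef
  -- finrank C = 3
  have hli3 : LinearIndependent (ZMod 2) ![v1, v2, v3] := by
    rw [Fintype.linearIndependent_iff]; decide
  have hC3 : Module.finrank (ZMod 2) C = 3 := by
    have := finrank_span_eq_card hli3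
    rwa [show Set.range ![v1, v2, v3] = {v1, v2, v3} by
      ext x; simp [Matrix.range_cons, Matrix.range_empty]; tauto] at this
  -- minDist C = 1
  have hv3C : v3 ∈ C := Submodule.subset_span (by simp)
  have hC1 : minDist C = 1 := by
    apply minDist_eq
    · exact ⟨v3, hv3C, by decide, by decide⟩
    · intro c _ hc0
      rcases Nat.eq_zero_or_pos (wt c) with h | h
      · exact absurd (wt_zero h) hc0
      · exact h
  -- spans and subset relations
  have hle12 : Submodule.span (ZMod 2) ({v1, v2} : Set (Fin 6 → ZMod 2)) ≤ C := by
    rw [Submodule.span_le]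
    rintro x (rfl | rfl) <;> exact Submodule.subset_span (by simp)
  have hlew : Submodule.span (ZMod 2) ({w1, w2} : Set (Fin 6 → ZMod 2)) ≤ C := by
    rw [Submodule.span_le]
    rintro x (rfl | rfl)
    · have : w1 = v1 + v3 := by decide
      rw [this]
      exact Submodule.add_mem _ (Submodule.subset_span (by simp)) hv3C
    · have : w2 = v2 + v3 := by decide
      rw [this]
      exact Submodule.add_mem _ (Submodule.subset_span (by simp)) hv3C
  have h12rank : Module.finrank (ZMod 2)
      (Submodule.span (ZMod 2) ({v1, v2} : Set (Fin 6 → ZMod 2))) = 2 :=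
    pair_span_finrank v1 v2 (by rw [Fintype.linearIndependent_iff]; decide)
  have hwrank : Module.finrank (ZMod 2)
      (Submodule.span (ZMod 2) ({w1, w2} : Set (Fin 6 → ZMod 2))) = 2 :=
    pair_span_finrank w1 w2 (by rw [Fintype.linearIndependent_iff]; decide)
  have h12min : minDist (Submodule.span (ZMod 2) ({v1, v2} : Set (Fin 6 → ZMod 2))) = 4 := by
    apply minDist_eq
    · exact ⟨v1, Submodule.subset_span (by simp), by decide, by decide⟩
    · intro c hc hc0
      rcases Submodule.mem_span_pair.mp hc with ⟨m, n, rfl⟩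
      clear hc
      revert hc0
      revert m n
      decide
  have hwmin : minDist (Submodule.span (ZMod 2) ({w1, w2} : Set (Fin 6 → ZMod 2))) = 3 := by
    apply minDist_eq
    · exact ⟨w1, Submodule.subset_span (by simp), by decide, by decide⟩
    · intro c hc hc0
      rcases Submodule.mem_span_pair.mp hc with ⟨m, n, rfl⟩
      clear hc
      revert hc0
      revert m n
      decide
  have hkey : ∀ S ≤ C, Module.finrank (ZMod 2) S = 3 → minDist S = 1 := by
    intro S hS h3
    have : S = C := Submodule.eq_of_le_of_finrank_eq hS (by rw [h3, hC3])
    rw [this, hC1]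
  refine ⟨hC3, hC1, hle12, h12rank, h12min, hlew, hwrank, hwmin, ?_, ?_, ?_⟩
  · rintro ⟨S, hS, h3, h4⟩
    rw [hkey S hS h3] at h4; exact absurd h4 (by norm_num)
  · rintro ⟨S, hS, h3, h4⟩
    rw [hkey S hS h3] at h4; exact absurd h4 (by norm_num)
  · intro S hS h3
    rw [hkey S hS h3]; omega
end

section
/- If C is a binary self-dual doubly-even (Type II) code of length n, then 8 divides n. -/
noncomputable def chi (b : ZMod 2) : ℂ := if b = 0 then 1 else -1

lemma chi_zero : chi 0 = 1 := rfl

lemma chi_add (a b : ZMod 2) : chi (a + b) = chi a * chi b := by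
  have h : ∀ x : ZMod 2, x = 0 ∨ x = 1 := by decide
  rcases h a with ha | ha <;> rcases h b with hb | hb <;>
    simp [ha, hb, chi, show (1 + 1 : ZMod 2) = 0 from by decide]

lemma chi_sum {ι : Type*} (s : Finset ι) (f : ι → ZMod 2) :
    chi (∑ i ∈ s, f i) = ∏ i ∈ s, chi (f i) := by
  classical
  induction s using Finset.induction with
  | empty => simp [chi_zero]
  | @insert a s h ih => simp [Finset.sum_insert h, Finset.prod_insert h, chi_add, ih]

lemma I_pow_wt {n : ℕ} (u : Fin n → ZMod 2) :
    (Complex.I : ℂ) ^ wt u = ∏ i, (if u i = 0 then 1 else Complex.I) := by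
  rw [wt, ← Finset.prod_const]
  rw [Finset.prod_filter]
  apply Finset.prod_congr rfl
  intro i _
  by_cases h : u i = 0 <;> simp [h]

lemma sum_over_two (f : ZMod 2 → ℂ) : ∑ b : ZMod 2, f b = f 0 + f 1 :=
  Fin.sum_univ_two f

lemma gs_inner_sum {n : ℕ} (c : Fin n → ZMod 2) :
    ∑ u : Fin n → ZMod 2, chi (∑ i, u i * c i) * Complex.I ^ wt u
      = ∏ i, (1 + chi (c i) * Complex.I) := by
  have key : ∀ u : Fin n → ZMod 2, chi (∑ i, u i * c i) * Complex.I ^ wt u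
      = ∏ i, (chi (u i * c i) * (if u i = 0 then 1 else Complex.I)) := by
    intro u
    rw [chi_sum, I_pow_wt, ← Finset.prod_mul_distrib]
  simp_rw [key]
  rw [← Fintype.prod_sum (fun i (b : ZMod 2) =>
    chi (b * c i) * (if b = 0 then 1 else Complex.I))]
  apply Finset.prod_congr rfl
  intro i _
  rw [sum_over_two]
  simp [chi_zero]

lemma wt_le {n : ℕ} (c : Fin n → ZMod 2) : wt c ≤ n := by
  rw [wt]
  calc (Finset.univ.filter fun i => c i ≠ 0).card ≤ Finset.univ.card :=
        Finset.card_filter_le _ _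
    _ = n := by simp

lemma gs_prod_eval {n : ℕ} (c : Fin n → ZMod 2) :
    ∏ i, (1 + chi (c i) * Complex.I)
      = (1 - Complex.I) ^ wt c * (1 + Complex.I) ^ (n - wt c) := by
  classical
  rw [← Finset.prod_filter_mul_prod_filter_not Finset.univ (fun i => c i ≠ 0)]
  have h1 : ∏ i ∈ Finset.univ.filter (fun i => c i ≠ 0), (1 + chi (c i) * Complex.I)
      = (1 - Complex.I) ^ wt c := by
    rw [Finset.prod_congr rfl (g := fun _ => 1 - Complex.I) ?_, Finset.prod_const, wt]
    intro i hi
    simp only [Finset.mem_filter] at hi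
    have hx : c i = 1 := by
      have h : ∀ x : ZMod 2, x = 0 ∨ x = 1 := by decide
      rcases h (c i) with h' | h' <;> tauto
    rw [hx, chi]
    norm_num
    ring
  have h2 : ∏ i ∈ Finset.univ.filter (fun i => ¬ c i ≠ 0), (1 + chi (c i) * Complex.I)
      = (1 + Complex.I) ^ (n - wt c) := by
    rw [Finset.prod_congr rfl (g := fun _ => 1 + Complex.I) ?_, Finset.prod_const]
    · congr 1
      have hcard := Finset.card_filter_add_card_filter_not
        (s := (Finset.univ : Finset (Fin n))) (p := fun i => c i ≠ 0)
      rw [wt] at *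
      simp only [Finset.card_univ, Fintype.card_fin] at hcard
      omega
    · intro i hi
      simp only [Finset.mem_filter, not_not] at hi
      rw [hi.2, chi_zero]
      ring
  rw [h1, h2]


noncomputable instance instFintypeCode {n : ℕ} (C : Submodule (ZMod 2) (Fin n → ZMod 2)) :
    Fintype ↥C := Fintype.ofFinite _

open scoped Classical in
lemma gs_orth {n : ℕ} (C : Submodule (ZMod 2) (Fin n → ZMod 2)) (u : Fin n → ZMod 2) :
    ∑ c : C, chi (∑ i, u i * (c : Fin n → ZMod 2) i)
      = if u ∈ dualCode C then (Fintype.card C : ℂ) else 0 := by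
  split_ifs with h
  · rw [Finset.sum_congr rfl (g := fun _ => (1:ℂ)) ?_]
    · simp [Finset.card_univ]
    · intro c _
      rw [h c.1 c.2, chi_zero]
  · have h' : ¬ ∀ c ∈ C, ∑ i, u i * c i = 0 := h
    push_neg at h'
    obtain ⟨c₀, hc₀, hne⟩ := h'
    have hc1 : ∑ i, u i * c₀ i = 1 := by
      have hx : ∀ x : ZMod 2, x = 0 ∨ x = 1 := by decide
      rcases hx (∑ i, u i * c₀ i) with h' | h' <;> tauto
    set S := ∑ c : C, chi (∑ i, u i * (c : Fin n → ZMod 2) i) with hS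
    have key : S = -S := by
      calc S = ∑ c : C, chi (∑ i, u i *
            ((Equiv.addRight (⟨c₀, hc₀⟩ : C) c : C) : Fin n → ZMod 2) i) :=
          (Equiv.sum_comp (Equiv.addRight (⟨c₀, hc₀⟩ : C)) _).symm
        _ = ∑ c : C, - chi (∑ i, u i * (c : Fin n → ZMod 2) i) := by
            apply Finset.sum_congr rfl
            intro c _
            have : ∑ i, u i * ((c : Fin n → ZMod 2) i + c₀ i)
                = (∑ i, u i * (c : Fin n → ZMod 2) i) + ∑ i, u i * c₀ i := by
              simp [mul_add, Finset.sum_add_distrib]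
            simp only [Equiv.coe_addRight, Submodule.coe_add, Pi.add_apply]
            rw [this, chi_add, hc1]
            simp [chi]
        _ = -S := by rw [hS, Finset.sum_neg_distrib]
    have h2 : (2 : ℂ) * S = 0 := by linear_combination key
    rcases mul_eq_zero.mp h2 with h' | h'
    · norm_num at h'
    · exact h'

lemma gs_I_pow (s : ℕ) (h : Complex.I ^ s = 1) : 4 ∣ s := by
  have h4 : s % 4 < 4 := Nat.mod_lt _ (by norm_num)
  have hs : s = 4 * (s / 4) + s % 4 := (Nat.div_add_mod s 4).symm
  rw [hs, pow_add, pow_mul, Complex.I_pow_four, one_pow, one_mul] at h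
  interval_cases hr : s % 4
  · omega
  · norm_num [Complex.ext_iff, pow_succ] at h
  · norm_num [Complex.ext_iff, pow_succ] at h
  · norm_num [Complex.ext_iff, pow_succ] at h

/-- The length of a binary self-dual doubly-even (Type II) code is divisible by 8. -/
theorem stmt_16 (n : ℕ) (C : Submodule (ZMod 2) (Fin n → ZMod 2))
    (hsd : dualCode C = C) (hde : ∀ c ∈ C, 4 ∣ wt c) : 8 ∣ n := by
  classical
  set m := Fintype.card C with hm
  have hm1 : 1 ≤ m := Fintype.card_pos
  have hone : ∀ c, c ∈ C → (Complex.I) ^ wt c = 1 := by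
    intro c hc
    obtain ⟨k, hk⟩ := hde c hc
    rw [hk, pow_mul, Complex.I_pow_four, one_pow]
  have hIn : ∀ c, c ∈ C → (1 - Complex.I) ^ wt c * (1 + Complex.I) ^ (n - wt c)
      = (1 + Complex.I) ^ n := by
    intro c hc
    obtain ⟨k, hk⟩ := hde c hc
    have h4 : ((1 - Complex.I) ^ 4) = ((1 + Complex.I) ^ 4) := by
      linear_combination (-8 * Complex.I) * Complex.I_sq
    rw [hk, pow_mul, h4, ← pow_mul, ← hk, ← pow_add,
      Nat.add_sub_cancel' (wt_le c)]
  have hT : (m : ℂ) * (1 + Complex.I) ^ n = (m : ℂ) * m := by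
    have e1 : ∑ c : C, ∑ u : Fin n → ZMod 2,
        chi (∑ i, u i * (c : Fin n → ZMod 2) i) * Complex.I ^ wt u
        = (m : ℂ) * (1 + Complex.I) ^ n := by
      rw [Finset.sum_congr rfl (g := fun c : C => (1 + Complex.I) ^ n) ?_]
      · rw [Finset.sum_const, Finset.card_univ, nsmul_eq_mul]
      · intro c _
        rw [gs_inner_sum, gs_prod_eval, hIn c.1 c.2]
    have e2 : ∑ c : C, ∑ u : Fin n → ZMod 2,
        chi (∑ i, u i * (c : Fin n → ZMod 2) i) * Complex.I ^ wt u
        = (m : ℂ) * m := by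
      rw [Finset.sum_comm]
      have key : ∀ u : Fin n → ZMod 2,
          ∑ c : C, chi (∑ i, u i * (c : Fin n → ZMod 2) i) * Complex.I ^ wt u
          = (if u ∈ C then (m : ℂ) else 0) := by
        intro u
        rw [← Finset.sum_mul, gs_orth, hsd]
        by_cases hu : u ∈ C
        · simp [hu, hone u hu]
          exact Fintype.card_congr (Equiv.refl _)
        · simp [hu]
      rw [Finset.sum_congr rfl (fun u _ => key u), ← Finset.sum_filter,
        Finset.sum_const]
      rw [show (Finset.univ.filter (fun u => u ∈ C)).card = m from ?_]
      · rw [nsmul_eq_mul]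
      · exact (Fintype.card_of_subtype (Finset.univ.filter (fun u => u ∈ C))
          (by simp)).symm
    rw [← e1, e2]
  have hcancel : (1 + Complex.I) ^ n = (m : ℂ) := by
    have hm0 : (m : ℂ) ≠ 0 := Nat.cast_ne_zero.mpr (by omega)
    exact mul_left_cancel₀ hm0 hT
  have h2 : (1 + Complex.I) ^ 2 = 2 * Complex.I := by linear_combination Complex.I_sq
  have h8c : (1 + Complex.I) ^ 8 = 16 := by
    calc (1 + Complex.I) ^ 8 = ((1 + Complex.I) ^ 2) ^ 4 := by rw [← pow_mul]
      _ = (2 * Complex.I) ^ 4 := by rw [h2]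
      _ = 16 := by rw [mul_pow, Complex.I_pow_four]; norm_num
  have h8 : ((m : ℂ)) ^ 8 = (16 : ℂ) ^ n := by
    rw [← hcancel, ← pow_mul, mul_comm, pow_mul, h8c]
  have hnat : m ^ 8 = 16 ^ n := by exact_mod_cast h8
  have hdvd : m ∣ 2 ^ (4 * n) := by
    have hd : m ∣ m ^ 8 := dvd_pow_self m (by norm_num)
    rw [hnat, show (16:ℕ) = 2 ^ 4 from rfl, ← pow_mul] at hd
    exact hd
  obtain ⟨s, _, hms⟩ := (Nat.dvd_prime_pow Nat.prime_two).mp hdvd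
  have hsn : 8 * s = 4 * n := by
    have hp : (2 : ℕ) ^ (8 * s) = 2 ^ (4 * n) := by
      rw [mul_comm 8 s, pow_mul, ← hms, hnat, show (16:ℕ) = 2 ^ 4 from rfl, ← pow_mul]
    exact Nat.pow_right_injective (le_refl 2) hp
  have hn2s : n = 2 * s := by omega
  have hIs : Complex.I ^ s = 1 := by
    have hc := hcancel
    rw [hn2s, pow_mul, h2, mul_pow, hms] at hc
    push_cast at hc
    have h2s : (2 : ℂ) ^ s ≠ 0 := pow_ne_zero _ two_ne_zero
    have := mul_left_cancel₀ h2s (hc.trans (mul_one ((2:ℂ)^s)).symm)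
    exact this
  have h4s : 4 ∣ s := gs_I_pow s hIs
  omega
end
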